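/- arXiv:1903.03776 — 2 statements merged into one kernel-verified Lean document; each statement's English description precedes it below -/
import Mathlib

section
/- Let n ≥ 2 and let L₁ and L₂ be finite-dimensional complex Lie algebras, each of dimension n + 1, each with one-dimensional derived algebra D(L_i) = [L_i, L_i] satisfying [L_i, D(L_i)] = D(L_i). Then L₁ and L₂ are isomorphic as Lie algebras. -/
open Module

private def brC (n : ℕ) : (Unit ⊕ Unit ⊕ Fin (n-1)) → (Unit ⊕ Unit ⊕ Fin (n-1)) → ℂ
  | Sum.inl _, Sum.inr (Sum.inl _) => 1
  | Sum.inr (Sum.inl _), Sum.inl _ => -1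
  | _, _ => 0

private lemma exists_goodBasis (n : ℕ) (hn : 2 ≤ n)
    (L : Type*) [LieRing L] [LieAlgebra ℂ L] [FiniteDimensional ℂ L]
    (hdim : Module.finrank ℂ L = n + 1)
    (hD : Module.finrank ℂ ↥(⁅(⊤ : LieIdeal ℂ L), (⊤ : LieIdeal ℂ L)⁆ : LieIdeal ℂ L) = 1)
    (hnp : ⁅(⊤ : LieIdeal ℂ L),
        (⁅(⊤ : LieIdeal ℂ L), (⊤ : LieIdeal ℂ L)⁆ : LieIdeal ℂ L)⁆ =
      ⁅(⊤ : LieIdeal ℂ L), (⊤ : LieIdeal ℂ L)⁆) :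
    ∃ b : Basis (Unit ⊕ Unit ⊕ Fin (n-1)) ℂ L,
      ∀ i j, ⁅b i, b j⁆ = brC n i j • b (Sum.inr (Sum.inl ())) := by
  set D : LieIdeal ℂ L := ⁅(⊤ : LieIdeal ℂ L), (⊤ : LieIdeal ℂ L)⁆ with hDdef
  have bD : Basis (Fin 1) ℂ ↥D := Module.finBasisOfFinrankEq ℂ ↥D hD
  set e : L := (bD 0 : L) with he
  have hrepr : ∀ d : ↥D, (d : L) = (bD.repr d 0) • e := by
    intro d
    conv_lhs => rw [← bD.sum_repr d]
    simp [Fin.sum_univ_one, he]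
  have hne : e ≠ 0 := by
    simpa [he] using bD.ne_zero 0
  have memD : ∀ z w : L, ⁅z, w⁆ ∈ D :=
    fun z w => LieSubmodule.lie_mem_lie (LieSubmodule.mem_top z) (LieSubmodule.mem_top w)
  -- the functional lam with ⁅z, e⁆ = lam z • e
  have heD : e ∈ D := (bD 0).2
  set lam : L →ₗ[ℂ] ℂ :=
    (bD.coord 0) ∘ₗ (LinearMap.codRestrict D.toSubmodule (-(LieAlgebra.ad ℂ L e))
      (fun z => by simpa using D.neg_mem (memD e z))) with hlamdef
  have klam : ∀ z : L, ⁅z, e⁆ = lam z • e := by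
    intro z
    have := hrepr ((LinearMap.codRestrict D.toSubmodule (-(LieAlgebra.ad ℂ L e))
      (fun z => by simpa using D.neg_mem (memD e z))) z)
    simp only [LinearMap.codRestrict_apply, LinearMap.neg_apply, LieAlgebra.ad_apply] at this
    rw [← lie_skew, this]
    congr 1
  have lam_e : lam e = 0 := by
    have h0 : (0 : L) = lam e • e := by rw [← klam e, lie_self]
    rcases smul_eq_zero.1 h0.symm with h | h
    · exact h
    · exact absurd h hne
  -- find x with lam x = 1
  have hex : ∃ z : L, lam z ≠ 0 := by
    by_contra h
    push_neg at h
    have hbot : D = ⊥ := by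
      rw [← hnp, LieSubmodule.lie_eq_bot_iff]
      intro x _ m hm
      have := hrepr ⟨m, hm⟩
      simp only [Submodule.coe_mk] at this
      rw [show m = (bD.repr ⟨m, hm⟩ 0) • e from this, lie_smul, klam, h, zero_smul, smul_zero]
    rw [hbot] at heD
    rw [LieSubmodule.mem_bot] at heD
    exact hne heD
  obtain ⟨z₀, hz₀⟩ := hex
  set x : L := (lam z₀)⁻¹ • z₀ with hx
  have lam_x : lam x = 1 := by
    simp [hx, inv_mul_cancel₀ hz₀]
  have hxe : ⁅x, e⁆ = e := by rw [klam, lam_x, one_smul]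
  -- the functional phi with ⁅x, z⁆ = phi z • e
  set phi : L →ₗ[ℂ] ℂ :=
    (bD.coord 0) ∘ₗ (LinearMap.codRestrict D.toSubmodule (LieAlgebra.ad ℂ L x)
      (fun z => by simpa using memD x z)) with hphidef
  have kphi : ∀ z : L, ⁅x, z⁆ = phi z • e := by
    intro z
    have := hrepr ((LinearMap.codRestrict D.toSubmodule (LieAlgebra.ad ℂ L x)
      (fun z => by simpa using memD x z)) z)
    simp only [LinearMap.codRestrict_apply, LieAlgebra.ad_apply] at this
    rw [this]
    congr 1
  have smul_e_inj : ∀ a b : ℂ, a • e = b • e → a = b := by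
    intro a b hab
    have : (a - b) • e = 0 := by rw [sub_smul, hab, sub_self]
    rcases smul_eq_zero.1 this with h | h
    · exact sub_eq_zero.1 h
    · exact absurd h hne
  have phi_x : phi x = 0 := by
    have : ⁅x, x⁆ = phi x • e := kphi x
    rw [lie_self] at this
    have := smul_e_inj 0 (phi x) (by rw [zero_smul, this])
    exact this.symm
  have phi_e : phi e = 1 := by
    have h1 : ⁅x, e⁆ = phi e • e := kphi e
    rw [hxe] at h1
    exact smul_e_inj (phi e) 1 (by rw [← h1, one_smul])
  have hxd : ∀ d ∈ D, ⁅x, d⁆ = d := by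
    intro d hd
    have h := hrepr ⟨d, hd⟩
    simp only [Submodule.coe_mk] at h
    rw [show d = (bD.repr ⟨d, hd⟩ 0) • e from h, lie_smul, hxe]
  have habel : ∀ z w : L, lam z = 0 → lam w = 0 → ⁅z, w⁆ = 0 := by
    intro z w hz hw
    have h1 : ⁅x, ⁅z, w⁆⁆ = ⁅z, w⁆ := hxd _ (memD z w)
    have h2 : ⁅x, ⁅z, w⁆⁆ = ⁅⁅x, z⁆, w⁆ + ⁅z, ⁅x, w⁆⁆ := leibniz_lie x z w
    have h3 : ⁅⁅x, z⁆, w⁆ = 0 := by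
      rw [kphi z, smul_lie, ← lie_skew e w, klam w, hw, zero_smul, neg_zero, smul_zero]
    have h4 : ⁅z, ⁅x, w⁆⁆ = 0 := by
      rw [kphi w, lie_smul, klam z, hz, zero_smul, smul_zero]
    rw [h2, h3, h4, add_zero] at h1
    exact h1.symm
  -- the complement W
  set W : Submodule ℂ L := LinearMap.ker lam ⊓ LinearMap.ker phi with hW
  set f : ℂ × (ℂ × ↥W) →ₗ[ℂ] L :=
    (LinearMap.toSpanSingleton ℂ L x).coprod
      ((LinearMap.toSpanSingleton ℂ L e).coprod W.subtype) with hf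
  have hfapp : ∀ (a b : ℂ) (w : ↥W), f (a, b, w) = a • x + b • e + (w : L) := by
    intro a b w
    simp [hf, LinearMap.toSpanSingleton_apply, add_assoc]
  have lam_w : ∀ w : ↥W, lam (w : L) = 0 := fun w => w.2.1
  have phi_w : ∀ w : ↥W, phi (w : L) = 0 := fun w => w.2.2
  have hinj : Function.Injective f := by
    rw [← LinearMap.ker_eq_bot]
    ext ⟨a, b, w⟩
    simp only [LinearMap.mem_ker, Submodule.mem_bot]
    constructor
    · intro h
      rw [hfapp] at h
      have ha : a = 0 := by
        have := congrArg lam h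
        simpa [lam_x, lam_e, lam_w w] using this
      have hb : b = 0 := by
        have := congrArg phi h
        simpa [ha, phi_x, phi_e, phi_w w] using this
      have hw : (w : L) = 0 := by
        rw [ha, hb] at h
        simpa using h
      simp [ha, hb, Prod.ext_iff]
      exact Subtype.ext hw
    · intro h
      rw [h]
      simp
  have hsurj : Function.Surjective f := by
    intro z
    set a : ℂ := lam z with ha
    set b : ℂ := phi (z - a • x) with hb
    have hmem : z - a • x - b • e ∈ W := by
      constructor
      · simp [LinearMap.mem_ker, map_sub, map_smul, lam_x, lam_e, ha, smul_eq_mul]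
      · show z - a • x - b • e ∈ LinearMap.ker phi
        rw [LinearMap.mem_ker, map_sub, map_smul, smul_eq_mul, phi_e, mul_one, hb, sub_self]
    refine ⟨(a, b, ⟨z - a • x - b • e, hmem⟩), ?_⟩
    rw [hfapp]
    show a • x + b • e + (z - a • x - b • e) = z
    abel
  set equivf : (ℂ × (ℂ × ↥W)) ≃ₗ[ℂ] L := LinearEquiv.ofBijective f ⟨hinj, hsurj⟩
    with hequivf
  have hWrank : Module.finrank ℂ ↥W = n - 1 := by
    have h1 := equivf.finrank_eq
    rw [Module.finrank_prod, Module.finrank_prod, Module.finrank_self, hdim] at h1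
    omega
  have bW : Basis (Fin (n-1)) ℂ ↥W := Module.finBasisOfFinrankEq ℂ ↥W hWrank
  set bV : Basis (Unit ⊕ Unit ⊕ Fin (n-1)) ℂ (ℂ × (ℂ × ↥W)) :=
    (Basis.singleton Unit ℂ).prod ((Basis.singleton Unit ℂ).prod bW) with hbV
  refine ⟨bV.map equivf, ?_⟩
  have hbx : (bV.map equivf) (Sum.inl ()) = x := by
    rw [Basis.map_apply]
    have : bV (Sum.inl ()) = ((1 : ℂ), ((0 : ℂ), (0 : ↥W))) := by
      simp [hbV, Basis.prod_apply, Prod.ext_iff]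
    rw [this, hequivf]; show f _ = _; rw [hfapp]
    simp
  have hbe : (bV.map equivf) (Sum.inr (Sum.inl ())) = e := by
    rw [Basis.map_apply]
    have : bV (Sum.inr (Sum.inl ())) = ((0 : ℂ), ((1 : ℂ), (0 : ↥W))) := by
      simp [hbV, Basis.prod_apply, Prod.ext_iff]
    rw [this, hequivf]; show f _ = _; rw [hfapp]
    simp
  have hbw : ∀ k, (bV.map equivf) (Sum.inr (Sum.inr k)) = (bW k : L) := by
    intro k
    rw [Basis.map_apply]
    have : bV (Sum.inr (Sum.inr k)) = ((0 : ℂ), ((0 : ℂ), bW k)) := by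
      simp [hbV, Basis.prod_apply, Prod.ext_iff]
    rw [this, hequivf]; show f _ = _; rw [hfapp]
    simp
  have lam_bw : ∀ k, lam ((bW k : L)) = 0 := fun k => lam_w (bW k)
  have phi_bw : ∀ k, phi ((bW k : L)) = 0 := fun k => phi_w (bW k)
  rintro (⟨⟩ | ⟨⟩ | k) (⟨⟩ | ⟨⟩ | l) <;>
    simp only [hbx, hbe, hbw, brC] <;>
    first
      | (rw [lie_self]; simp)
      | (rw [hxe]; simp)
      | (rw [kphi]; simp [phi_bw])
      | (rw [← lie_skew, hxe]; simp)
      | (rw [← lie_skew, kphi]; simp [phi_bw])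
      | (rw [habel _ _ (by simp [lam_e, lam_bw]) (by simp [lam_e, lam_bw])]; simp)

attribute [local instance 100] LieRing.ofAssociativeRing

/-- Any two complex Lie algebras of dimension `n + 1` (with `n ≥ 2`), each with
one-dimensional derived algebra `D(Lᵢ) = [Lᵢ, Lᵢ]` satisfying `[Lᵢ, D(Lᵢ)] = D(Lᵢ)`, are
isomorphic as Lie algebras. -/
theorem anA1_unique_up_to_iso
    (n : ℕ) (hn : 2 ≤ n)
    (L₁ : Type*) [LieRing L₁] [LieAlgebra ℂ L₁] [FiniteDimensional ℂ L₁]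
    (L₂ : Type*) [LieRing L₂] [LieAlgebra ℂ L₂] [FiniteDimensional ℂ L₂]
    (hdim₁ : Module.finrank ℂ L₁ = n + 1)
    (hD₁ : Module.finrank ℂ ↥(⁅(⊤ : LieIdeal ℂ L₁), (⊤ : LieIdeal ℂ L₁)⁆ : LieIdeal ℂ L₁) = 1)
    (hnp₁ : ⁅(⊤ : LieIdeal ℂ L₁),
        (⁅(⊤ : LieIdeal ℂ L₁), (⊤ : LieIdeal ℂ L₁)⁆ : LieIdeal ℂ L₁)⁆ =
      ⁅(⊤ : LieIdeal ℂ L₁), (⊤ : LieIdeal ℂ L₁)⁆)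
    (hdim₂ : Module.finrank ℂ L₂ = n + 1)
    (hD₂ : Module.finrank ℂ ↥(⁅(⊤ : LieIdeal ℂ L₂), (⊤ : LieIdeal ℂ L₂)⁆ : LieIdeal ℂ L₂) = 1)
    (hnp₂ : ⁅(⊤ : LieIdeal ℂ L₂),
        (⁅(⊤ : LieIdeal ℂ L₂), (⊤ : LieIdeal ℂ L₂)⁆ : LieIdeal ℂ L₂)⁆ =
      ⁅(⊤ : LieIdeal ℂ L₂), (⊤ : LieIdeal ℂ L₂)⁆) :
    Nonempty (L₁ ≃ₗ⁅ℂ⁆ L₂) := by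
  obtain ⟨b₁, h₁⟩ := exists_goodBasis n hn L₁ hdim₁ hD₁ hnp₁
  obtain ⟨b₂, h₂⟩ := exists_goodBasis n hn L₂ hdim₂ hD₂ hnp₂
  set g : L₁ ≃ₗ[ℂ] L₂ := b₁.equiv b₂ (Equiv.refl _) with hg
  have hgb : ∀ i, g (b₁ i) = b₂ i := by
    intro i; simp [hg, Basis.equiv_apply]
  have key : ∀ x y : L₁, g ⁅x, y⁆ = ⁅g x, g y⁆ := by
    set B1 : L₁ →ₗ[ℂ] L₁ →ₗ[ℂ] L₂ :=
      ((LieAlgebra.ad ℂ L₁).toLinearMap :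
          L₁ →ₗ[ℂ] (L₁ →ₗ[ℂ] L₁)).compr₂ g.toLinearMap with hB1
    set B2 : L₁ →ₗ[ℂ] L₁ →ₗ[ℂ] L₂ :=
      (((LieAlgebra.ad ℂ L₂).toLinearMap : L₂ →ₗ[ℂ] (L₂ →ₗ[ℂ] L₂)) ∘ₗ
          g.toLinearMap).compl₂ g.toLinearMap with hB2
    have hBapp1 : ∀ x y : L₁, B1 x y = g ⁅x, y⁆ := fun x y => rfl
    have hBapp2 : ∀ x y : L₁, B2 x y = ⁅g x, g y⁆ := fun x y => rfl
    have hBB : B1 = B2 := by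
      apply LinearMap.ext_basis b₁ b₁
      intro i j
      rw [hBapp1, hBapp2, hgb, hgb, h₁ i j, h₂ i j, map_smul, hgb]
    intro x y
    rw [← hBapp1, ← hBapp2, hBB]
  exact ⟨{ toLieHom := { toLinearMap := g.toLinearMap, map_lie' := fun {x y} => key x y },
           invFun := g.symm, left_inv := g.left_inv, right_inv := g.right_inv }⟩
end

section
/- Let p ≥ 1 and let L be a finite-dimensional complex Lie algebra. Suppose I is a one-dimensional ideal of L with [L, I] = I, and suppose there exist u_1, …, u_{2p+1} ∈ L whose cosets form a basis of L/I and satisfy: [u_{2l−1}, u_{2l}] − u_{2p+1} ∈ I for l = 1, …, p, and [u_i, u_j] ∈ I for every other pair i < j. Then L has a basis {x_1, …, x_{2p+1}, y} with I = Span{y} such that [x_{2l−1}, x_{2l}] = x_{2p+1} for l = 1, …, p, [x_1, y] = y, [x_i, y] = 0 for i = 2, …, 2p+1, and [x_i, x_j] = 0 for all other pairs i < j with (i, j) ≠ (2l−1, 2l). -/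
open Submodule Module

private lemma my_sum_lie {L : Type*} [LieRing L] {ι : Type*} (s : Finset ι) (f : ι → L) (z : L) :
    ⁅∑ i ∈ s, f i, z⁆ = ∑ i ∈ s, ⁅f i, z⁆ := by
  induction s using Finset.cons_induction with
  | empty => simp
  | cons a s ha ih => simp [Finset.sum_cons, add_lie, ih]

private lemma exists_y_f (p : ℕ) (hp : 1 ≤ p)
    (L : Type*) [LieRing L] [LieAlgebra ℂ L] [FiniteDimensional ℂ L]
    (I : LieIdeal ℂ L) (hdimI : Module.finrank ℂ I = 1)
    (hnp : ⁅(⊤ : LieIdeal ℂ L), I⁆ = I) :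
    ∃ (y : L) (f : L → ℂ), y ≠ 0 ∧ y ∈ I ∧ (I : Submodule ℂ L) = span ℂ {y} ∧
      (∀ z, ⁅z, y⁆ = f z • y) ∧
      (∀ a b, f (a + b) = f a + f b) ∧
      (∀ (c : ℂ) a, f (c • a) = c * f a) ∧
      (∀ a b, f (a - b) = f a - f b) ∧
      (∀ a b : L, f ⁅a, b⁆ = 0) ∧
      (∀ z ∈ I, f z = 0) ∧
      (∃ z, f z ≠ 0) := by
  classical
  obtain ⟨v, hv0, hvsp⟩ := finrank_eq_one_iff'.mp hdimI
  set y : L := (v : L) with hy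
  have hy0 : y ≠ 0 := fun h => hv0 (Subtype.ext h)
  have hyI : y ∈ I := v.2
  have hspan : (I : Submodule ℂ L) = span ℂ {y} := by
    apply le_antisymm
    · intro z hz
      obtain ⟨c, hc⟩ := hvsp ⟨z, hz⟩
      exact mem_span_singleton.mpr ⟨c, congrArg Subtype.val hc⟩
    · rw [span_le, Set.singleton_subset_iff]; exact hyI
  have hmem : ∀ z ∈ I, ∃ c : ℂ, c • y = z := by
    intro z hz
    exact mem_span_singleton.mp (hspan ▸ (LieSubmodule.mem_toSubmodule I).mpr hz)
  have huniq : ∀ c c' : ℂ, c • y = c' • y → c = c' := by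
    intro c c' h
    have : (c - c') • y = 0 := by rw [sub_smul, h, sub_self]
    rcases smul_eq_zero.mp this with h | h
    · exact sub_eq_zero.mp h
    · exact absurd h hy0
  choose f hf using fun z => hmem ⁅z, y⁆ (I.lie_mem hyI)
  have hf' : ∀ z, ⁅z, y⁆ = f z • y := fun z => (hf z).symm
  have fadd : ∀ a b, f (a + b) = f a + f b := by
    intro a b
    apply huniq
    rw [← hf' (a+b), add_lie, hf' a, hf' b, add_smul]
  have fsmul : ∀ (c : ℂ) a, f (c • a) = c * f a := by
    intro c a
    apply huniq
    rw [← hf' (c • a), smul_lie, hf' a, smul_smul]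
  have fzero : f 0 = 0 := by
    apply huniq
    rw [← hf' 0, zero_lie, zero_smul]
  have fsub : ∀ a b, f (a - b) = f a - f b := by
    intro a b
    have := fadd (a - b) b
    rw [sub_add_cancel] at this
    rw [this]; ring
  have fbrk : ∀ a b : L, f ⁅a, b⁆ = 0 := by
    intro a b
    apply huniq
    rw [← hf' ⁅a, b⁆, zero_smul, lie_lie, hf' a, hf' b, lie_smul, lie_smul, hf' a, hf' b,
      smul_smul, smul_smul]
    ring_nf
    abel
  have fI : ∀ z ∈ I, f z = 0 := by
    intro z hz
    obtain ⟨c, hc⟩ := hmem z hz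
    rw [← hc, fsmul, show f y = 0 from ?_, mul_zero]
    apply huniq
    rw [← hf' y, lie_self, zero_smul]
  refine ⟨y, f, hy0, hyI, hspan, hf', fadd, fsmul, fsub, fbrk, fI, ?_⟩
  by_contra h
  push_neg at h
  have : ⁅(⊤ : LieIdeal ℂ L), I⁆ = ⊥ := by
    rw [LieSubmodule.lie_eq_bot_iff]
    intro x _ m hm
    obtain ⟨c, hc⟩ := hmem m hm
    rw [← hc, lie_smul, hf' x, h x, zero_smul, smul_zero]
  rw [hnp] at this
  rw [this] at hyI
  exact hy0 ((LieSubmodule.mem_bot _).mp hyI)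


private lemma symm_other {p : ℕ} {L : Type*} [LieRing L] [LieAlgebra ℂ L]
    {I : LieIdeal ℂ L} {V : ℕ → L}
    (hoth : ∀ a b : ℕ, a < b → b ≤ 2*p → (∀ l < p, ¬(a = 2*l ∧ b = 2*l+1)) → ⁅V a, V b⁆ ∈ I) :
    ∀ a b : ℕ, a ≤ 2*p → b ≤ 2*p →
      (∀ l < p, ¬(a = 2*l ∧ b = 2*l+1) ∧ ¬(b = 2*l ∧ a = 2*l+1)) → ⁅V a, V b⁆ ∈ I := by
  intro a b ha hb h
  rcases lt_trichotomy a b with hab | hab | hab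
  · exact hoth a b hab hb (fun l hl => (h l hl).1)
  · subst hab; rw [lie_self]; exact zero_mem _
  · rw [← lie_skew]
    exact neg_mem (hoth b a hab ha (fun l hl => (h l hl).2))


private def tauF (k : ℕ) : ℕ → ℕ := fun n =>
  if n = 0 then k
  else if n = 1 then (if k % 2 = 0 then k+1 else k-1)
  else if n = 2*(k/2) then 0
  else if n = 2*(k/2)+1 then 1
  else n

private lemma stageA
    (p : ℕ) (hp : 1 ≤ p)
    (L : Type*) [LieRing L] [LieAlgebra ℂ L] [FiniteDimensional ℂ L]
    (I : LieIdeal ℂ L)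
    (y : L) (f : L → ℂ)
    (fsmul : ∀ (c : ℂ) a, f (c • a) = c * f a)
    (U : ℕ → L)
    (hsp : ⊤ ≤ span ℂ (U '' Set.Iio (2*p+1) ∪ {y}))
    (hpair : ∀ l < p, ⁅U (2*l), U (2*l+1)⁆ - U (2*p) ∈ I)
    (hO : ∀ a b : ℕ, a ≤ 2*p → b ≤ 2*p →
      (∀ l < p, ¬(a = 2*l ∧ b = 2*l+1) ∧ ¬(b = 2*l ∧ a = 2*l+1)) → ⁅U a, U b⁆ ∈ I)
    (k : ℕ) (hk : k < 2*p) (hfk : f (U k) ≠ 0) :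
    ∃ V : ℕ → L,
      (⊤ ≤ span ℂ (V '' Set.Iio (2*p+1) ∪ {y})) ∧
      (∀ l < p, ⁅V (2*l), V (2*l+1)⁆ - V (2*p) ∈ I) ∧
      (∀ a b : ℕ, a < b → b ≤ 2*p → (∀ l < p, ¬(a = 2*l ∧ b = 2*l+1)) → ⁅V a, V b⁆ ∈ I) ∧
      (f (V 0) = 1) := by
  classical
  set c := f (U k) with hc
  set V : ℕ → L := fun n => if n = 0 then c⁻¹ • U k
    else if n = 1 then (if k % 2 = 0 then c • U (k+1) else -(c • U (k-1)))
    else U (tauF k n) with hV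
  have hV0 : V 0 = c⁻¹ • U k := by simp [hV]
  have hVn : ∀ n, 2 ≤ n → V n = U (tauF k n) := by
    intro n hn
    rw [hV]
    simp only
    rw [if_neg (by omega), if_neg (by omega)]
  have htau_le : ∀ n, n ≤ 2*p → tauF k n ≤ 2*p := by
    intro n hn
    simp only [tauF]
    split_ifs <;> (try contradiction) <;> omega
  have htau2p : tauF k (2*p) = 2*p := by
    simp only [tauF]
    split_ifs <;> (try contradiction) <;> omega
  have hVd : ∀ n, 2 ≤ n ∨ n ≤ 1 → ∃ d : ℂ, d ≠ 0 ∧ V n = d • U (tauF k n) := by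
    intro n _
    rcases Nat.lt_or_ge n 2 with h2 | h2
    · interval_cases n
      · exact ⟨c⁻¹, inv_ne_zero hfk, by simp [hV0, tauF]⟩
      · by_cases hke : k % 2 = 0
        · exact ⟨c, hfk, by simp [hV, tauF, hke]⟩
        · exact ⟨-c, neg_ne_zero.mpr hfk, by simp [hV, tauF, hke, neg_smul]⟩
    · exact ⟨1, one_ne_zero, by rw [one_smul, hVn n h2]⟩
  have fV0 : f (V 0) = 1 := by
    rw [hV0, fsmul, ← hc, inv_mul_cancel₀ hfk]
  have hV2p : V (2*p) = U (2*p) := by rw [hVn (2*p) (by omega), htau2p]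
  have hpairV : ∀ l < p, ⁅V (2*l), V (2*l+1)⁆ - V (2*p) ∈ I := by
    intro l hl
    rw [hV2p]
    rcases Nat.eq_zero_or_pos l with h0 | h0
    · subst h0
      show ⁅V 0, V 1⁆ - U (2*p) ∈ I
      by_cases hke : k % 2 = 0
      · obtain ⟨m, hm⟩ : ∃ m, k = 2*m := ⟨k/2, by omega⟩
        have e0 : V 0 = c⁻¹ • U (2*m) := by rw [hV0, hm]
        have e1 : V 1 = c • U (k+1) := by simp [hV, hke]
        rw [hm] at e1
        rw [e0, e1, lie_smul, smul_lie, smul_smul, mul_inv_cancel₀ hfk, one_smul]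
        exact hpair m (by omega)
      · obtain ⟨m, hm⟩ : ∃ m, k = 2*m+1 := ⟨k/2, by omega⟩
        have e0 : V 0 = c⁻¹ • U (2*m+1) := by rw [hV0, hm]
        have e1 : V 1 = -(c • U (k-1)) := by simp [hV, hke]
        rw [hm, Nat.add_sub_cancel] at e1
        rw [e0, e1, lie_neg, lie_smul, smul_lie, smul_smul, mul_inv_cancel₀ hfk, one_smul,
          lie_skew]
        exact hpair m (by omega)
    · rw [hVn (2*l) (by omega), hVn (2*l+1) (by omega)]
      by_cases hlm : l = k/2
      · have e1 : tauF k (2*l) = 0 := by simp only [tauF]; split_ifs <;> (try contradiction) <;> omega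
        have e2 : tauF k (2*l+1) = 1 := by simp only [tauF]; split_ifs <;> (try contradiction) <;> omega
        rw [e1, e2]
        simpa using hpair 0 hp
      · have e1 : tauF k (2*l) = 2*l := by simp only [tauF]; split_ifs <;> (try contradiction) <;> omega
        have e2 : tauF k (2*l+1) = 2*l+1 := by simp only [tauF]; split_ifs <;> (try contradiction) <;> omega
        rw [e1, e2]
        exact hpair l hl
  have htauval : ∀ n, tauF k n = (if n = 0 then k
      else if n = 1 then (if k % 2 = 0 then k+1 else k-1)
      else if n = 2*(k/2) then 0
      else if n = 2*(k/2)+1 then 1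
      else n) := fun n => rfl
  have htcase : ∀ n : ℕ, (n = 0 ∧ tauF k n = k) ∨
      (n = 1 ∧ k % 2 = 0 ∧ tauF k n = k+1) ∨
      (n = 1 ∧ k % 2 = 1 ∧ tauF k n = k-1) ∨
      (2 ≤ n ∧ n = 2*(k/2) ∧ tauF k n = 0) ∨
      (2 ≤ n ∧ n = 2*(k/2)+1 ∧ tauF k n = 1) ∨
      (2 ≤ n ∧ n ≠ 2*(k/2) ∧ n ≠ 2*(k/2)+1 ∧ tauF k n = n) := by
    intro n
    have h := htauval n
    split_ifs at h with h0 h1 hke hk0 hk1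
    · exact Or.inl ⟨h0, h⟩
    · exact Or.inr (Or.inl ⟨h1, hke, h⟩)
    · exact Or.inr (Or.inr (Or.inl ⟨h1, by omega, h⟩))
    · exact Or.inr (Or.inr (Or.inr (Or.inl ⟨by omega, hk0, h⟩)))
    · exact Or.inr (Or.inr (Or.inr (Or.inr (Or.inl ⟨by omega, hk1, h⟩))))
    · exact Or.inr (Or.inr (Or.inr (Or.inr (Or.inr ⟨by omega, hk0, hk1, h⟩))))
  have hothV : ∀ a b : ℕ, a < b → b ≤ 2*p →
      (∀ l < p, ¬(a = 2*l ∧ b = 2*l+1)) → ⁅V a, V b⁆ ∈ I := by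
    intro a b hab hb hnp
    obtain ⟨da, hda, ea⟩ := hVd a (by omega)
    obtain ⟨db, hdb, eb⟩ := hVd b (by omega)
    rw [ea, eb, smul_lie, lie_smul]
    refine I.smul_mem _ (I.smul_mem _
      (hO (tauF k a) (tauF k b) (htau_le a (by omega)) (htau_le b hb) ?_))
    intro l' hl'
    have h1 := hnp l' hl'
    have h2 := hnp (k/2) (by omega)
    have h3 := hnp 0 hp
    have ha' := htcase a
    have hb' := htcase b
    omega
  have hsurj : ∀ n, n ≤ 2*p → ∃ m, m ≤ 2*p ∧ tauF k m = n := by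
    intro n hn
    have h0 := htcase 0
    have h1 := htcase 1
    have h2 := htcase (2*(k/2))
    have h3 := htcase (2*(k/2)+1)
    have h4 := htcase n
    by_cases e1 : tauF k 0 = n
    · exact ⟨0, by omega, e1⟩
    by_cases e2 : tauF k 1 = n
    · exact ⟨1, by omega, e2⟩
    by_cases e3 : tauF k (2*(k/2)) = n
    · exact ⟨2*(k/2), by omega, e3⟩
    by_cases e4 : tauF k (2*(k/2)+1) = n
    · exact ⟨2*(k/2)+1, by omega, e4⟩
    refine ⟨n, hn, ?_⟩
    omega
  have hspV : ⊤ ≤ span ℂ (V '' Set.Iio (2*p+1) ∪ {y}) := by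
    refine le_trans hsp (span_le.mpr ?_)
    rintro z (⟨n, hn, rfl⟩ | hz)
    · have hn' : n ≤ 2*p := by
        have := Set.mem_Iio.mp hn
        omega
      obtain ⟨m, hm, hmn⟩ := hsurj n hn'
      obtain ⟨d, hd, e⟩ := hVd m (by omega)
      rw [hmn] at e
      have hUn : U n = d⁻¹ • V m := by
        rw [e, smul_smul, inv_mul_cancel₀ hd, one_smul]
      rw [hUn]
      exact smul_mem _ _ (subset_span (Or.inl ⟨m, Set.mem_Iio.mpr (by omega), rfl⟩))
    · exact subset_span (Or.inr hz)
  exact ⟨V, hspV, hpairV, hothV, fV0⟩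



private lemma stageBC
    (p : ℕ) (hp : 1 ≤ p)
    (L : Type*) [LieRing L] [LieAlgebra ℂ L] [FiniteDimensional ℂ L]
    (I : LieIdeal ℂ L)
    (y : L) (f : L → ℂ)
    (hf : ∀ z, ⁅z, y⁆ = f z • y)
    (fadd : ∀ a b, f (a + b) = f a + f b)
    (fsmul : ∀ (c : ℂ) a, f (c • a) = c * f a)
    (fsub : ∀ a b, f (a - b) = f a - f b)
    (fbrk : ∀ a b : L, f ⁅a, b⁆ = 0)
    (fI : ∀ z ∈ I, f z = 0)
    (V : ℕ → L)
    (hsp : ⊤ ≤ span ℂ (V '' Set.Iio (2*p+1) ∪ {y}))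
    (hpair : ∀ l < p, ⁅V (2*l), V (2*l+1)⁆ - V (2*p) ∈ I)
    (hO : ∀ a b : ℕ, a ≤ 2*p → b ≤ 2*p →
      (∀ l < p, ¬(a = 2*l ∧ b = 2*l+1) ∧ ¬(b = 2*l ∧ a = 2*l+1)) → ⁅V a, V b⁆ ∈ I)
    (fV0 : f (V 0) = 1) :
    ∃ W : ℕ → L,
      (⊤ ≤ span ℂ (W '' Set.Iio (2*p+1) ∪ {y})) ∧
      (∀ l < p, ⁅W (2*l), W (2*l+1)⁆ - W (2*p) ∈ I) ∧
      (∀ a b : ℕ, a < b → b ≤ 2*p → (∀ l < p, ¬(a = 2*l ∧ b = 2*l+1)) → ⁅W a, W b⁆ ∈ I) ∧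
      (f (W 0) = 1) ∧ (∀ n, 1 ≤ n → n ≤ 2*p → f (W n) = 0) := by
  classical
  have fzero : f 0 = 0 := by
    have h := fsub 0 0
    rw [sub_self] at h
    linear_combination h
  have fV2p : f (V (2*p)) = 0 := by
    have h1 : f (⁅V 0, V 1⁆ - V (2*p)) = 0 := fI _ (by simpa using hpair 0 hp)
    rw [fsub, fbrk] at h1
    linear_combination -h1
  set t : ℕ → L := fun l => f (V (2*l+1)) • V (2*l) - f (V (2*l)) • V (2*l+1) with ht
  set Wd : L := ∑ l ∈ Finset.range p, t l with hWd
  have KW : ∀ b, b ≤ 2*p → ⁅Wd, V b⁆ - f (V b) • V (2*p) ∈ I := by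
    intro b hb
    obtain ⟨m, hm⟩ : ∃ m, b = 2*m ∨ b = 2*m+1 := ⟨b/2, by omega⟩
    have hexp : ⁅Wd, V b⁆ = ∑ l ∈ Finset.range p,
        (f (V (2*l+1)) • ⁅V (2*l), V b⁆ - f (V (2*l)) • ⁅V (2*l+1), V b⁆) := by
      rw [hWd, my_sum_lie]
      exact Finset.sum_congr rfl (fun l _ => by rw [ht, sub_lie, smul_lie, smul_lie])
    rw [hexp]
    rcases Nat.lt_or_ge m p with hmp | hmp
    · rw [← Finset.add_sum_erase _ _ (Finset.mem_range.mpr hmp), add_sub_right_comm]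
      refine add_mem ?_ (sum_mem fun l hl => ?_)
      · rcases hm with hb2 | hb2 <;> subst hb2
        · rw [lie_self, smul_zero, zero_sub, ← smul_neg, lie_skew, ← smul_sub]
          exact I.smul_mem _ (hpair m hmp)
        · rw [lie_self, smul_zero, sub_zero, ← smul_sub]
          exact I.smul_mem _ (hpair m hmp)
      · rw [Finset.mem_erase, Finset.mem_range] at hl
        refine sub_mem (I.smul_mem _ (hO (2*l) b (by omega) hb ?_))
          (I.smul_mem _ (hO (2*l+1) b (by omega) hb ?_)) <;> intro l' hl' <;> omega
    · have hb2p : b = 2*p := by omega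
      subst hb2p
      rw [fV2p, zero_smul, sub_zero]
      refine sum_mem fun l hl => ?_
      rw [Finset.mem_range] at hl
      refine sub_mem (I.smul_mem _ (hO (2*l) (2*p) (by omega) (by omega) ?_))
        (I.smul_mem _ (hO (2*l+1) (2*p) (by omega) (by omega) ?_)) <;> intro l' hl' <;> omega
  set Xb : ℕ → L := fun n => if n = 0 then V 0 else if n = 1 then -Wd
    else V n - f (V n) • V 0 with hXb
  have hXb0 : Xb 0 = V 0 := by simp [hXb]
  have hXb1 : Xb 1 = -Wd := by simp [hXb]
  have hXbn : ∀ n, 2 ≤ n → Xb n = V n - f (V n) • V 0 := by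
    intro n hn
    rw [hXb]
    simp only
    rw [if_neg (by omega), if_neg (by omega)]
  have hXb2p : Xb (2*p) = V (2*p) := by
    rw [hXbn (2*p) (by omega), fV2p, zero_smul, sub_zero]
  -- f values
  have fWd : f Wd = 0 := by
    have fsum : ∀ (s : Finset ℕ) (g : ℕ → L), f (∑ l ∈ s, g l) = ∑ l ∈ s, f (g l) := by
      intro s g
      induction s using Finset.cons_induction with
      | empty => simpa using fzero
      | cons a s ha ih => rw [Finset.sum_cons, Finset.sum_cons, fadd, ih]
    rw [hWd, fsum]
    refine Finset.sum_eq_zero fun l _ => ?_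
    rw [ht]
    simp only
    rw [fsub, fsmul, fsmul]
    ring
  have fneg : ∀ a, f (-a) = -f a := by
    intro a
    have h := fsub 0 a
    rw [zero_sub] at h
    rw [h, fzero]
    ring
  have fXb0 : f (Xb 0) = 1 := by rw [hXb0, fV0]
  have fXbn : ∀ n, 1 ≤ n → n ≤ 2*p → f (Xb n) = 0 := by
    intro n h1 _
    rcases eq_or_lt_of_le h1 with h | h
    · rw [← h, hXb1, fneg, fWd, neg_zero]
    · rw [hXbn n (by omega), fsub, fsmul, fV0]
      ring
  -- pair relations
  have hpairX : ∀ l < p, ⁅Xb (2*l), Xb (2*l+1)⁆ - Xb (2*p) ∈ I := by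
    intro l hl
    rcases Nat.eq_zero_or_pos l with h | h
    · subst h
      have h01 : ⁅Xb (2*0), Xb (2*0+1)⁆ - Xb (2*p) = ⁅Wd, V 0⁆ - V (2*p) := by
        norm_num [hXb0, hXb1, hXb2p]
      rw [h01]
      have := KW 0 (by omega)
      rwa [fV0, one_smul] at this
    · have key : ⁅Xb (2*l), Xb (2*l+1)⁆ - Xb (2*p)
          = (⁅V (2*l), V (2*l+1)⁆ - V (2*p)) - f (V (2*l+1)) • ⁅V (2*l), V 0⁆
            - f (V (2*l)) • ⁅V 0, V (2*l+1)⁆ := by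
        rw [hXbn (2*l) (by omega), hXbn (2*l+1) (by omega), hXb2p]
        simp only [sub_lie, lie_sub, smul_lie, lie_smul, lie_self, smul_zero, sub_zero]
        module
      rw [key]
      refine sub_mem (sub_mem (hpair l hl) (I.smul_mem _ (hO (2*l) 0 (by omega) (by omega) ?_)))
        (I.smul_mem _ (hO 0 (2*l+1) (by omega) (by omega) ?_)) <;> intro l' hl' <;> omega
  -- other relations
  have hothX : ∀ a b : ℕ, a < b → b ≤ 2*p →
      (∀ l < p, ¬(a = 2*l ∧ b = 2*l+1)) → ⁅Xb a, Xb b⁆ ∈ I := by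
    intro a b hab hb hnp
    rcases Nat.lt_or_ge a 2 with ha2 | ha2
    · interval_cases a
      · have hb2 : 2 ≤ b := by
          have := hnp 0 hp
          omega
        rw [hXb0, hXbn b hb2, lie_sub, lie_smul, lie_self, smul_zero, sub_zero]
        exact hO 0 b (by omega) hb (by intro l' hl'; omega)
      · have hb2 : 2 ≤ b := by omega
        rw [hXb1, hXbn b hb2, neg_lie]
        refine neg_mem ?_
        have key : ⁅Wd, V b - f (V b) • V 0⁆
            = (⁅Wd, V b⁆ - f (V b) • V (2*p)) - f (V b) • (⁅Wd, V 0⁆ - f (V 0) • V (2*p)) := by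
          rw [fV0]
          simp only [lie_sub, lie_smul, one_smul]
          module
        rw [key]
        exact sub_mem (KW b hb) (I.smul_mem _ (KW 0 (by omega)))
    · have key : ⁅Xb a, Xb b⁆ = ⁅V a, V b⁆ - f (V b) • ⁅V a, V 0⁆
          - f (V a) • ⁅V 0, V b⁆ := by
        rw [hXbn a ha2, hXbn b (by omega)]
        simp only [sub_lie, lie_sub, smul_lie, lie_smul, lie_self, smul_zero, sub_zero]
        module
      rw [key]
      refine sub_mem (sub_mem (hO a b (by omega) hb
          (by intro l' hl'; exact ⟨hnp l' hl', by omega⟩))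
        (I.smul_mem _ (hO a 0 (by omega) (by omega) (by intro l' hl'; omega))))
        (I.smul_mem _ (hO 0 b (by omega) hb (by intro l' hl'; omega)))
  -- spanning
  set S := span ℂ (Xb '' Set.Iio (2*p+1) ∪ {y}) with hS
  have hyS : y ∈ S := subset_span (Or.inr rfl)
  have hXbS : ∀ n, n < 2*p+1 → Xb n ∈ S := fun n hn => subset_span (Or.inl ⟨n, hn, rfl⟩)
  have hV0S : V 0 ∈ S := by rw [← hXb0]; exact hXbS 0 (by omega)
  have hVnS : ∀ n, 2 ≤ n → n < 2*p+1 → V n ∈ S := by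
    intro n h2 hn
    have : V n = Xb n + f (V n) • V 0 := by rw [hXbn n h2]; abel
    rw [this]
    exact add_mem (hXbS n hn) (smul_mem _ _ hV0S)
  have hWdS : Wd ∈ S := by
    have : Wd = -Xb 1 := by rw [hXb1, neg_neg]
    rw [this]
    exact neg_mem (hXbS 1 (by omega))
  have hV1S : V 1 ∈ S := by
    have hsplit : Wd = t 0 + ∑ l ∈ (Finset.range p).erase 0, t l :=
      (Finset.add_sum_erase _ _ (Finset.mem_range.mpr (by omega))).symm
    have ht0 : t 0 = f (V 1) • V 0 - V 1 := by
      rw [ht]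
      norm_num [fV0]
    have hv1 : V 1 = f (V 1) • V 0 - Wd + ∑ l ∈ (Finset.range p).erase 0, t l := by
      rw [hsplit, ht0]
      abel
    rw [hv1]
    refine add_mem (sub_mem (smul_mem _ _ hV0S) hWdS) (sum_mem fun l hl => ?_)
    rw [Finset.mem_erase, Finset.mem_range] at hl
    rw [ht]
    simp only
    exact sub_mem (smul_mem _ _ (hVnS (2*l) (by omega) (by omega)))
      (smul_mem _ _ (hVnS (2*l+1) (by omega) (by omega)))
  have hspX : ⊤ ≤ S := by
    refine le_trans hsp (span_le.mpr ?_)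
    rintro z (⟨n, hn, rfl⟩ | hz)
    · rcases Nat.lt_or_ge n 2 with h2 | h2
      · interval_cases n
        · exact hV0S
        · exact hV1S
      · exact hVnS n h2 hn
    · exact hz ▸ hyS
  exact ⟨Xb, hspX, hpairX, hothX, fXb0, fXbn⟩


private lemma stageD
    (p : ℕ) (hp : 1 ≤ p)
    (L : Type*) [LieRing L] [LieAlgebra ℂ L] [FiniteDimensional ℂ L]
    (I : LieIdeal ℂ L)
    (y : L) (f : L → ℂ)
    (hy0 : y ≠ 0)
    (hspan : (I : Submodule ℂ L) = span ℂ {y})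
    (hf : ∀ z, ⁅z, y⁆ = f z • y)
    (hrank : finrank ℂ L = 2*p+2)
    (W : ℕ → L)
    (hsp : ⊤ ≤ span ℂ (W '' Set.Iio (2*p+1) ∪ {y}))
    (hpair : ∀ l < p, ⁅W (2*l), W (2*l+1)⁆ - W (2*p) ∈ I)
    (hO : ∀ a b : ℕ, a ≤ 2*p → b ≤ 2*p →
      (∀ l < p, ¬(a = 2*l ∧ b = 2*l+1) ∧ ¬(b = 2*l ∧ a = 2*l+1)) → ⁅W a, W b⁆ ∈ I)
    (hW0 : f (W 0) = 1)
    (hWn : ∀ n, 1 ≤ n → n ≤ 2*p → f (W n) = 0) :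
    ∃ (x : Fin (2 * p + 1) → L) (y : L),
      (I : Submodule ℂ L) = Submodule.span ℂ {y} ∧
      LinearIndependent ℂ (Sum.elim x ![y]) ∧
      Submodule.span ℂ (Set.range (Sum.elim x ![y])) = ⊤ ∧
      (∀ l : ℕ, ∀ hl : l < p,
        ⁅x ⟨2 * l, by omega⟩, x ⟨2 * l + 1, by omega⟩⁆ = x ⟨2 * p, by omega⟩) ∧
      ⁅x ⟨0, by omega⟩, y⁆ = y ∧
      (∀ i : Fin (2 * p + 1), i.val ≠ 0 → ⁅x i, y⁆ = 0) ∧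
      (∀ i j : Fin (2 * p + 1), i < j →
        (∀ l : ℕ, l < p → ¬(i.val = 2 * l ∧ j.val = 2 * l + 1)) → ⁅x i, x j⁆ = 0) := by
  classical
  have memI : ∀ z, z ∈ I → ∃ c : ℂ, z = c • y := by
    intro z hz
    have hz' : z ∈ (I : Submodule ℂ L) := (LieSubmodule.mem_toSubmodule I).mpr hz
    rw [hspan] at hz'
    obtain ⟨c, hc⟩ := mem_span_singleton.mp hz'
    exact ⟨c, hc.symm⟩
  have huniq : ∀ c c' : ℂ, c • y = c' • y → c = c' := by
    intro c c' h
    have : (c - c') • y = 0 := by rw [sub_smul, h, sub_self]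
    rcases smul_eq_zero.mp this with h | h
    · exact sub_eq_zero.mp h
    · exact absurd h hy0
  set co : L → ℂ := fun z => if h : ∃ c : ℂ, z = c • y then h.choose else 0 with hco
  have co_spec : ∀ z : L, (∃ c : ℂ, z = c • y) → z = co z • y := by
    intro z h
    rw [hco]; simp only [dif_pos h]; exact h.choose_spec
  -- basic bracket facts
  have F0 : ⁅W 0, y⁆ = y := by rw [hf, hW0, one_smul]
  have F1 : ∀ n, 1 ≤ n → n ≤ 2*p → ⁅W n, y⁆ = 0 ∧ ⁅y, W n⁆ = 0 := by
    intro n h1 h2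
    have : ⁅W n, y⁆ = 0 := by rw [hf, hWn n h1 h2, zero_smul]
    exact ⟨this, by rw [← lie_skew, this, neg_zero]⟩
  -- pair 0
  have hp0I : ⁅W 0, W 1⁆ - W (2*p) ∈ I := by simpa using hpair 0 hp
  have F2 : ⁅W 0, W 1⁆ = W (2*p) + co (⁅W 0, W 1⁆ - W (2*p)) • y := by
    have := co_spec _ (memI _ hp0I)
    rw [← this]; abel
  -- F3
  have hO0 : ∀ j, 2 ≤ j → j ≤ 2*p → ⁅W 0, W j⁆ ∈ I := by
    intro j h2 hj
    exact hO 0 j (by omega) hj (by intro l hl; omega)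
  have F3 : ∀ j, 2 ≤ j → j ≤ 2*p → ⁅W 0, W j⁆ = co ⁅W 0, W j⁆ • y := by
    intro j h2 hj
    exact co_spec _ (memI _ (hO0 j h2 hj))
  -- claim 1
  have F4 : ∀ a b : ℕ, 2 ≤ a → a ≤ 2*p → 2 ≤ b → b ≤ 2*p →
      (∀ l < p, ¬(a = 2*l ∧ b = 2*l+1) ∧ ¬(b = 2*l ∧ a = 2*l+1)) → ⁅W a, W b⁆ = 0 := by
    intro a b ha2 ha hb2 hb hnp
    have hmem := hO a b ha hb hnp
    have hc := co_spec _ (memI _ hmem)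
    have key : ⁅W 0, ⁅W a, W b⁆⁆ = co ⁅W a, W b⁆ • y := by
      conv_lhs => rw [hc]
      rw [lie_smul, F0]
    rw [leibniz_lie, F3 a ha2 ha, F3 b hb2 hb] at key
    rw [smul_lie, lie_smul, (F1 b (by omega) hb).2, (F1 a (by omega) ha).1] at key
    simp only [smul_zero, add_zero, zero_add] at key
    have : co ⁅W a, W b⁆ = 0 := huniq _ _ (by rw [zero_smul]; exact key.symm)
    rw [hc, this, zero_smul]
  -- claim 2
  have F5 : ∀ j, 2 ≤ j → j ≤ 2*p → ⁅W 1, W j⁆ = 0 := by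
    intro j h2 hj
    have hmem : ⁅W 1, W j⁆ ∈ I := hO 1 j (by omega) hj (by intro l hl; omega)
    have hc := co_spec _ (memI _ hmem)
    have key : ⁅W 0, ⁅W 1, W j⁆⁆ = co ⁅W 1, W j⁆ • y := by
      conv_lhs => rw [hc]
      rw [lie_smul, F0]
    rw [leibniz_lie, F2, F3 j h2 hj] at key
    rw [add_lie, smul_lie, lie_smul, (F1 j (by omega) hj).2, (F1 1 (by omega) (by omega)).1] at key
    have h2pj : ⁅W (2*p), W j⁆ = 0 := by
      rcases eq_or_lt_of_le hj with h | h
      · subst h; exact lie_self _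
      · exact F4 (2*p) j (by omega) (by omega) h2 (by omega) (by intro l hl; omega)
    rw [h2pj] at key
    simp only [smul_zero, add_zero, zero_add] at key
    have : co ⁅W 1, W j⁆ = 0 := huniq _ _ (by rw [zero_smul]; exact key.symm)
    rw [hc, this, zero_smul]
  -- claim 3: pair constants for l ≥ 1
  have F6 : ∀ l, 1 ≤ l → l < p →
      ⁅W (2*l), W (2*l+1)⁆ = W (2*p) + (-(co ⁅W 0, W (2*p)⁆)) • y := by
    intro l h1 hl
    have hmem := hpair l hl
    have hc := co_spec _ (memI _ hmem)
    have heq : ⁅W (2*l), W (2*l+1)⁆ = W (2*p) + co (⁅W (2*l), W (2*l+1)⁆ - W (2*p)) • y := by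
      rw [← hc]; abel
    have key : ⁅W 0, ⁅W (2*l), W (2*l+1)⁆⁆
        = (co ⁅W 0, W (2*p)⁆ + co (⁅W (2*l), W (2*l+1)⁆ - W (2*p))) • y := by
      conv_lhs => rw [heq, lie_add, lie_smul, F0, F3 (2*p) (by omega) (by omega)]
      rw [add_smul]
    rw [leibniz_lie, F3 (2*l) (by omega) (by omega), F3 (2*l+1) (by omega) (by omega),
      smul_lie, lie_smul, (F1 (2*l+1) (by omega) (by omega)).2,
      (F1 (2*l) (by omega) (by omega)).1] at key
    simp only [smul_zero, add_zero, zero_add] at key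
    have hzz : co ⁅W 0, W (2*p)⁆ + co (⁅W (2*l), W (2*l+1)⁆ - W (2*p)) = 0 :=
      huniq _ _ (by rw [zero_smul]; exact key.symm)
    rw [heq, show co (⁅W (2*l), W (2*l+1)⁆ - W (2*p)) = -(co ⁅W 0, W (2*p)⁆) by
      linear_combination hzz]
  -- the final family
  set c2p := co ⁅W 0, W (2*p)⁆ with hc2p
  set cp0 := co (⁅W 0, W 1⁆ - W (2*p)) with hcp0
  set X : ℕ → L := fun n => if n = 0 then W 0 else if n = 1 then W 1 + (-c2p - cp0) • y
    else W n - co ⁅W 0, W n⁆ • y with hX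
  have hX0 : X 0 = W 0 := by simp [hX]
  have hX1 : X 1 = W 1 + (-c2p - cp0) • y := by simp [hX]
  have hXn : ∀ n, 2 ≤ n → X n = W n - co ⁅W 0, W n⁆ • y := by
    intro n hn
    rw [hX]
    simp only
    rw [if_neg (by omega), if_neg (by omega)]
  have hX2p : X (2*p) = W (2*p) - c2p • y := by rw [hXn (2*p) (by omega), hc2p]
  -- brackets with y
  have hXyn : ∀ n, 1 ≤ n → n ≤ 2*p → ⁅X n, y⁆ = 0 := by
    intro n h1 h2
    rcases eq_or_lt_of_le h1 with h | h
    · rw [← h, hX1, add_lie, smul_lie, lie_self, smul_zero, add_zero]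
      exact (F1 1 (by omega) (by omega)).1
    · rw [hXn n (by omega), sub_lie, smul_lie, lie_self, smul_zero, sub_zero]
      exact (F1 n h1 h2).1
  -- pair relations
  have hP0 : ⁅X 0, X 1⁆ = X (2*p) := by
    rw [hX0, hX1, hX2p, lie_add, lie_smul, F0, F2]
    module
  have hPl : ∀ l, 1 ≤ l → l < p → ⁅X (2*l), X (2*l+1)⁆ = X (2*p) := by
    intro l h1 hl
    rw [hXn (2*l) (by omega), hXn (2*l+1) (by omega), hX2p]
    rw [sub_lie, lie_sub, lie_sub, lie_smul, smul_lie, smul_lie, lie_smul,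
      (F1 (2*l) (by omega) (by omega)).1, (F1 (2*l+1) (by omega) (by omega)).2, lie_self,
      F6 l h1 hl]
    module
  -- non-pair relations
  have hNP : ∀ a b : ℕ, a < b → b ≤ 2*p →
      (∀ l < p, ¬(a = 2*l ∧ b = 2*l+1)) → ⁅X a, X b⁆ = 0 := by
    intro a b hab hb hnp
    rcases Nat.lt_or_ge a 2 with ha2 | ha2
    · interval_cases a
      · have hb2 : 2 ≤ b := by
          have := hnp 0 hp
          omega
        rw [hX0, hXn b hb2, lie_sub, lie_smul, F0, sub_eq_zero]
        exact F3 b hb2 hb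
      · have hb2 : 2 ≤ b := by omega
        rw [hX1, hXn b hb2, add_lie, lie_sub, lie_sub, smul_lie, lie_smul, lie_smul, smul_lie,
          (F1 b (by omega) hb).2, (F1 1 (by omega) (by omega)).1, lie_self,
          F5 b hb2 hb]
        module
    · rw [hXn a ha2, hXn b (by omega), sub_lie, lie_sub, lie_sub, lie_smul, smul_lie, smul_lie,
        lie_smul, (F1 a (by omega) (by omega)).1, (F1 b (by omega) hb).2, lie_self,
        F4 a b ha2 (by omega) (by omega) hb (by intro l hl; constructor <;> [exact hnp l hl; omega])]
      module
  -- spanning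
  set S := span ℂ (X '' Set.Iio (2*p+1) ∪ {y}) with hS
  have hyS : y ∈ S := subset_span (Or.inr rfl)
  have hXS : ∀ n, n < 2*p+1 → X n ∈ S := by
    intro n hn
    exact subset_span (Or.inl ⟨n, hn, rfl⟩)
  have hWS : ∀ n, n < 2*p+1 → W n ∈ S := by
    intro n hn
    rcases Nat.lt_or_ge n 2 with h2 | h2
    · interval_cases n
      · rw [← hX0]; exact hXS 0 (by omega)
      · have : W 1 = X 1 - (-c2p - cp0) • y := by rw [hX1]; abel
        rw [this]
        exact sub_mem (hXS 1 (by omega)) (smul_mem _ _ hyS)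
    · have : W n = X n + co ⁅W 0, W n⁆ • y := by rw [hXn n h2]; abel
      rw [this]
      exact add_mem (hXS n hn) (smul_mem _ _ hyS)
  have hStop : ⊤ ≤ S := by
    refine le_trans hsp (span_le.mpr ?_)
    rintro z (⟨n, hn, rfl⟩ | hz)
    · exact hWS n hn
    · exact hz ▸ hyS
  -- assemble
  have hrange : Set.range (Sum.elim (fun i : Fin (2*p+1) => X i.val) ![y])
      = X '' Set.Iio (2*p+1) ∪ {y} := by
    rw [Set.Sum.elim_range]
    congr 1
    · ext z
      constructor
      · rintro ⟨i, rfl⟩; exact ⟨i.val, i.isLt, rfl⟩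
      · rintro ⟨n, hn, rfl⟩; exact ⟨⟨n, hn⟩, rfl⟩
    · ext z
      simp [Matrix.range_cons, Matrix.range_empty]
  have hspTop : span ℂ (Set.range (Sum.elim (fun i : Fin (2*p+1) => X i.val) ![y])) = ⊤ := by
    rw [hrange]
    exact le_antisymm le_top hStop
  refine ⟨fun i => X i.val, y, hspan, ?_, hspTop, ?_, ?_, ?_, ?_⟩
  · refine linearIndependent_of_top_le_span_of_card_eq_finrank (le_of_eq hspTop.symm) ?_
    simp [hrank]
  · intro l hl
    show ⁅X (2*l), X (2*l+1)⁆ = X (2*p)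
    rcases Nat.eq_zero_or_pos l with h | h
    · subst h
      simpa using hP0
    · exact hPl l h hl
  · show ⁅X 0, y⁆ = y
    rw [hX0]; exact F0
  · intro i hi
    show ⁅X i.val, y⁆ = 0
    exact hXyn i.val (by omega) (by have := i.isLt; omega)
  · intro i j hij h
    show ⁅X i.val, X j.val⁆ = 0
    exact hNP i.val j.val hij (by have := j.isLt; omega) h

/-- Structure theorem for H_p-A(1) algebras. If `I` is a one-dimensional
ideal of a finite-dimensional complex Lie algebra `L` with `[L, I] = I`, and
`u_0, …, u_{2p}` are elements whose cosets form a basis of `L/I` with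
`[u_{2l}, u_{2l+1}] − u_{2p} ∈ I` (for `l < p`) and `[u_i, u_j] ∈ I` for every other pair
`i < j`, then `L` has a basis `{x_0, …, x_{2p}, y}` with `I = Span{y}`,
`[x_{2l}, x_{2l+1}] = x_{2p}` for `l < p`, `[x_0, y] = y`, `[x_i, y] = 0` for `i ≠ 0`,
and all other brackets of pairs of basis elements zero. -/
theorem hpA1_structure
    (p : ℕ) (hp : 1 ≤ p)
    (L : Type*) [LieRing L] [LieAlgebra ℂ L] [FiniteDimensional ℂ L]
    (I : LieIdeal ℂ L) (hdimI : Module.finrank ℂ I = 1)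
    (hnp : ⁅(⊤ : LieIdeal ℂ L), I⁆ = I)
    (u : Fin (2 * p + 1) → L)
    (hu_li : LinearIndependent ℂ fun i => (LieSubmodule.Quotient.mk (N := I) (u i) : L ⧸ I))
    (hu_span : Submodule.span ℂ
      (Set.range fun i => (LieSubmodule.Quotient.mk (N := I) (u i) : L ⧸ I)) = ⊤)
    (hpair : ∀ l : ℕ, ∀ hl : l < p,
      ⁅u ⟨2 * l, by omega⟩, u ⟨2 * l + 1, by omega⟩⁆ - u ⟨2 * p, by omega⟩ ∈ I)
    (hother : ∀ i j : Fin (2 * p + 1), i < j →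
      (∀ l : ℕ, l < p → ¬(i.val = 2 * l ∧ j.val = 2 * l + 1)) → ⁅u i, u j⁆ ∈ I) :
    ∃ (x : Fin (2 * p + 1) → L) (y : L),
      (I : Submodule ℂ L) = Submodule.span ℂ {y} ∧
      LinearIndependent ℂ (Sum.elim x ![y]) ∧
      Submodule.span ℂ (Set.range (Sum.elim x ![y])) = ⊤ ∧
      (∀ l : ℕ, ∀ hl : l < p,
        ⁅x ⟨2 * l, by omega⟩, x ⟨2 * l + 1, by omega⟩⁆ = x ⟨2 * p, by omega⟩) ∧
      ⁅x ⟨0, by omega⟩, y⁆ = y ∧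
      (∀ i : Fin (2 * p + 1), i.val ≠ 0 → ⁅x i, y⁆ = 0) ∧
      (∀ i j : Fin (2 * p + 1), i < j →
        (∀ l : ℕ, l < p → ¬(i.val = 2 * l ∧ j.val = 2 * l + 1)) → ⁅x i, x j⁆ = 0) := by
  classical
  obtain ⟨y, f, hy0, hyI, hspan, hf, fadd, fsmul, fsub, fbrk, fI, z0, hz0⟩ :=
    exists_y_f p hp L I hdimI hnp
  set U : ℕ → L := fun n => if h : n < 2*p+1 then u ⟨n, h⟩ else 0 with hU
  have hUval : ∀ n (h : n < 2*p+1), U n = u ⟨n, h⟩ := by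
    intro n h
    rw [hU]
    simp only
    rw [dif_pos h]
  have hUpair : ∀ l < p, ⁅U (2*l), U (2*l+1)⁆ - U (2*p) ∈ I := by
    intro l hl
    rw [hUval (2*l) (by omega), hUval (2*l+1) (by omega), hUval (2*p) (by omega)]
    exact hpair l hl
  have hUoth : ∀ a b : ℕ, a < b → b ≤ 2*p →
      (∀ l < p, ¬(a = 2*l ∧ b = 2*l+1)) → ⁅U a, U b⁆ ∈ I := by
    intro a b hab hb hnp'
    rw [hUval a (by omega), hUval b (by omega)]
    exact hother ⟨a, by omega⟩ ⟨b, by omega⟩ (by exact Fin.mk_lt_mk.mpr hab)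
      (fun l hl => hnp' l hl)
  have hUO := symm_other hUoth
  -- spanning
  have hsup : span ℂ (Set.range u) ⊔ (I : Submodule ℂ L) = ⊤ := by
    have key : ∀ q ∈ span ℂ (Set.range fun i => (LieSubmodule.Quotient.mk (N := I) (u i) : L ⧸ I)),
        ∃ w ∈ span ℂ (Set.range u), (LieSubmodule.Quotient.mk (N := I) w : L ⧸ I) = q := by
      intro q hq
      induction hq using Submodule.span_induction with
      | mem x hx =>
        obtain ⟨i, rfl⟩ := hx
        exact ⟨u i, subset_span ⟨i, rfl⟩, rfl⟩
      | zero => exact ⟨0, zero_mem _, rfl⟩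
      | add a b _ _ iha ihb =>
        obtain ⟨w1, h1, e1⟩ := iha
        obtain ⟨w2, h2, e2⟩ := ihb
        exact ⟨w1 + w2, add_mem h1 h2, by rw [← e1, ← e2]; rfl⟩
      | smul c a _ ih =>
        obtain ⟨w1, h1, e1⟩ := ih
        exact ⟨c • w1, smul_mem _ _ h1, by rw [← e1]; rfl⟩
    rw [eq_top_iff]
    intro z _
    obtain ⟨w, hw, hmk⟩ := key (LieSubmodule.Quotient.mk (N := I) z) (hu_span ▸ mem_top)
    have hzw : z - w ∈ I := by
      have h5 : (Submodule.Quotient.mk z : L ⧸ (I : Submodule ℂ L)) = Submodule.Quotient.mk w :=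
        hmk.symm
      exact (Submodule.Quotient.eq (I : Submodule ℂ L)).mp h5
    refine Submodule.mem_sup.mpr ⟨w, hw, z - w, ?_, by abel⟩
    exact (LieSubmodule.mem_toSubmodule I).mpr hzw
  have himg : U '' Set.Iio (2*p+1) = Set.range u := by
    ext z
    constructor
    · rintro ⟨n, hn, rfl⟩
      have hn' : n < 2*p+1 := hn
      rw [hUval n hn']
      exact ⟨⟨n, hn'⟩, rfl⟩
    · rintro ⟨i, rfl⟩
      exact ⟨i.val, i.isLt, by rw [hUval i.val i.isLt]⟩
  have hUsp : ⊤ ≤ span ℂ (U '' Set.Iio (2*p+1) ∪ {y}) := by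
    rw [span_union, himg, ← hspan, hsup]
  -- find a nonvanishing index
  have fU2p : f (U (2*p)) = 0 := by
    have h1 : f (⁅U 0, U 1⁆ - U (2*p)) = 0 := fI _ (by simpa using hUpair 0 hp)
    rw [fsub, fbrk] at h1
    linear_combination -h1
  obtain ⟨k, hklt, hfk⟩ : ∃ k, k < 2*p ∧ f (U k) ≠ 0 := by
    by_contra hcon
    push_neg at hcon
    have fzero : f 0 = 0 := by
      have h := fsub 0 0
      rw [sub_self] at h
      linear_combination h
    have hall : ∀ w ∈ span ℂ (U '' Set.Iio (2*p+1) ∪ {y}), f w = 0 := by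
      intro w hw
      induction hw using Submodule.span_induction with
      | mem x hx =>
        rcases hx with ⟨n, hn, rfl⟩ | hx
        · have hn' : n < 2*p+1 := hn
          by_cases h2p : n = 2*p
          · rw [h2p]; exact fU2p
          · exact hcon n (by omega)
        · rw [Set.mem_singleton_iff.mp hx]
          exact fI y hyI
      | zero => exact fzero
      | add a b _ _ iha ihb => rw [fadd, iha, ihb, add_zero]
      | smul c a _ ih => rw [fsmul, ih, mul_zero]
    exact hz0 (hall z0 (hUsp mem_top))
  obtain ⟨V, hVsp, hVpair, hVoth, fV0⟩ :=
    stageA p hp L I y f fsmul U hUsp hUpair hUO k hklt hfk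
  obtain ⟨W, hWsp, hWpair, hWoth, fW0, fWn⟩ :=
    stageBC p hp L I y f hf fadd fsmul fsub fbrk fI V hVsp hVpair (symm_other hVoth) fV0
  have hrank : finrank ℂ L = 2*p+2 := by
    have b := Basis.mk hu_li (le_of_eq hu_span.symm)
    have h1 : finrank ℂ (L ⧸ I) = 2*p+1 := by
      rw [finrank_eq_card_basis b, Fintype.card_fin]
    have h2 := Submodule.finrank_quotient_add_finrank (I : Submodule ℂ L)
    have h3 : finrank ℂ (L ⧸ (I : Submodule ℂ L)) = finrank ℂ (L ⧸ I) := rfl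
    have h4 : finrank ℂ (I : Submodule ℂ L) = finrank ℂ I := rfl
    omega
  exact stageD p hp L I y f hy0 hspan hf hrank W hWsp hWpair (symm_other hWoth) fW0 fWn
end
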